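/- Let Λ ⊆ ℝ^n be a lattice and V ⊆ ℝ^n a set tiling ℝ^n by Λ (meaning ⋃_{z∈Λ}(z+V) = ℝ^n and V ∩ (z+V) ⊆ ∂V for all z ∈ Λ, z ≠ 0). Let Φ be an injective linear endomorphism of ℝ^n with Φ(Λ) ⊆ Λ and w ≥ 1. Then the set D̃ := {α ∈ Λ : Φ^{−w}(α) ∈ V} contains a complete residue system of Λ modulo Φ^w(Λ). Furthermore, if α, α′ ∈ D̃ are distinct and α ≡ α′ (mod Φ^w(Λ)), then both Φ^{−w}(α) and Φ^{−w}(α′) lie in the boundary ∂V. -/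

import Mathlib

/-- Lemma 4.2: for a set `V` tiling `ℝ^n` by the lattice `Λ`, the set
`D̃ = {α ∈ Λ : Φ^{-w} α ∈ V}` contains a complete residue system modulo
`Φ^w(Λ)`, and two distinct congruent elements of `D̃` both have
`Φ^{-w}`-image on the boundary of `V`. -/
theorem tiling_residue_system
    {E : Type*} [NormedAddCommGroup E] [NormedSpace ℝ E] [FiniteDimensional ℝ E]
    {n : ℕ} (b : Module.Basis (Fin n) ℝ E)
    (Λ : Set E) (hΛ : Λ = ↑(Submodule.span ℤ (Set.range ⇑b)))
    (Φ : E ≃ₗ[ℝ] E) (hΦΛ : ∀ x ∈ Λ, Φ x ∈ Λ)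
    (w : ℕ) (hw : 1 ≤ w)
    (V : Set E)
    (hVcover : ∀ x : E, ∃ z ∈ Λ, x - z ∈ V)
    (hVdisj : ∀ z ∈ Λ, z ≠ 0 → ∀ x ∈ V, x - z ∈ V → x ∈ frontier V) :
    (∀ β ∈ Λ, ∃ α, (α ∈ Λ ∧ (Φ ^ w).symm α ∈ V) ∧ β - α ∈ ⇑(Φ ^ w) '' Λ) ∧
      (∀ α α', (α ∈ Λ ∧ (Φ ^ w).symm α ∈ V) → (α' ∈ Λ ∧ (Φ ^ w).symm α' ∈ V) →
        α ≠ α' → α - α' ∈ ⇑(Φ ^ w) '' Λ →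
        (Φ ^ w).symm α ∈ frontier V ∧ (Φ ^ w).symm α' ∈ frontier V) := by
  -- Λ is closed under subtraction, negation, and Φ^w
  have hsub : ∀ x ∈ Λ, ∀ y ∈ Λ, x - y ∈ Λ := by
    intro x hx y hy
    rw [hΛ] at hx hy ⊢
    exact Submodule.sub_mem _ hx hy
  have hpow : ∀ k : ℕ, ∀ x ∈ Λ, (Φ ^ k) x ∈ Λ := by
    intro k
    induction k with
    | zero => intro x hx; simpa using hx
    | succ m ih =>
        intro x hx
        have : (Φ ^ (m + 1)) x = (Φ ^ m) (Φ x) := by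
          rw [pow_succ]; rfl
        rw [this]
        exact ih _ (hΦΛ x hx)
  constructor
  · intro β hβ
    obtain ⟨z, hz, hzV⟩ := hVcover ((Φ ^ w).symm β)
    refine ⟨β - (Φ ^ w) z, ⟨hsub _ hβ _ (hpow w z hz), ?_⟩, ?_⟩
    · have : (Φ ^ w).symm (β - (Φ ^ w) z) = (Φ ^ w).symm β - z := by
        rw [map_sub, LinearEquiv.symm_apply_apply]
      rw [this]; exact hzV
    · refine ⟨z, hz, ?_⟩
      abel
  · rintro α α' ⟨hα, hαV⟩ ⟨hα', hα'V⟩ hne ⟨z, hz, hzeq⟩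
    have hz0 : z ≠ 0 := by
      rintro rfl
      simp at hzeq
      exact hne (sub_eq_zero.mp hzeq.symm)
    have hx : (Φ ^ w).symm α - z = (Φ ^ w).symm α' := by
      have : (Φ ^ w).symm (α - α') = z := by rw [← hzeq, LinearEquiv.symm_apply_apply]
      rw [map_sub] at this
      linear_combination (norm := abel) this
    constructor
    · exact hVdisj z hz hz0 _ hαV (by rw [hx]; exact hα'V)
    · have hznegΛ : -z ∈ Λ := by
        have := hsub 0 (by rw [hΛ]; exact Submodule.zero_mem _) z hz
        simpa using this
      refine hVdisj (-z) hznegΛ (by simpa using hz0) _ hα'V ?_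
      have : (Φ ^ w).symm α' - (-z) = (Φ ^ w).symm α := by
        rw [← hx]; abel
      rw [this]; exact hαV
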